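/- The function I(x,y,p) = p²(x + 3p²/8)³ is a first integral of the characteristic field of the implicit ODE p³ + 2xp + y = 0: on the surface M = {(x,y,p) : p³ + 2xp + y = 0}, the derivative of I along the field τ = F_p ∂_x + pF_p ∂_y - (F_x + pF_y) ∂_p with F = p³ + 2xp + y vanishes identically. -/

import Mathlib

/-- `I(x,y,p) = p²(x + 3p²/8)³` is a first integral of the characteristic field
`τ = (3p²+2x) ∂_x + p(3p²+2x) ∂_y - 3p ∂_p` of the implicit ODE
`p³ + 2xp + y = 0` on its surface `M`. -/
theorem stmt15 (x y p : ℝ) (hM : p ^ 3 + 2 * x * p + y = 0) :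
    fderiv ℝ (fun v : ℝ × ℝ × ℝ => v.2.2 ^ 2 * (v.1 + 3 * v.2.2 ^ 2 / 8) ^ 3)
      (x, y, p) (3 * p ^ 2 + 2 * x, p * (3 * p ^ 2 + 2 * x), -3 * p) = 0 := by
  have h1 : HasFDerivAt (fun v : ℝ × ℝ × ℝ => v.1)
      (ContinuousLinearMap.fst ℝ ℝ (ℝ × ℝ)) (x, y, p) := hasFDerivAt_fst
  have h2 : HasFDerivAt (fun v : ℝ × ℝ × ℝ => v.2.2)
      ((ContinuousLinearMap.snd ℝ ℝ ℝ).comp (ContinuousLinearMap.snd ℝ ℝ (ℝ × ℝ)))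
      (x, y, p) := hasFDerivAt_snd.snd
  simp only [pow_succ, pow_zero, one_mul, div_eq_mul_inv]
  have hq := h2.mul h2
  have hs := h1.add ((hq.const_mul 3).mul_const (8:ℝ)⁻¹)
  have h := hq.mul ((hs.mul hs).mul hs)
  rw [HasFDerivAt.fderiv (f := fun v : ℝ × ℝ × ℝ => v.2.2 * v.2.2 *
      ((v.1 + 3 * (v.2.2 * v.2.2) * 8⁻¹) * (v.1 + 3 * (v.2.2 * v.2.2) * 8⁻¹) *
        (v.1 + 3 * (v.2.2 * v.2.2) * 8⁻¹))) h]
  simp [ContinuousLinearMap.smul_apply, ContinuousLinearMap.add_apply,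
    ContinuousLinearMap.comp_apply, ContinuousLinearMap.coe_fst',
    ContinuousLinearMap.coe_snd', smul_eq_mul]
  ring
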